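/- Minimum eigenvalue of the per-arm design matrix (Corollary D.7): Let V ∈ ℝ^{d₁×d₁} and W ∈ ℝ^{d₂×d₂} be symmetric positive definite with λ_min(V) ≥ ρτ/2 and λ_min(W) ≥ ρτ/2 for some ρ, τ > 0, and let B ∈ ℝ^{d₁×d₂} satisfy ‖V^{−1/2} B W^{−1/2}‖ ≤ 1/2 in operator norm. Then the block matrix M = [[V, B],[Bᵀ, W]] satisfies λ_min(M) ≥ ρτ/4. -/

import Mathlib

open Matrix

set_option maxHeartbeats 1000000

noncomputable section

/-- Operator norm (largest singular value) of a real matrix. -/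
def opNorm {m n : Type*} [Fintype m] [Fintype n] [DecidableEq n] (A : Matrix m n ℝ) : ℝ :=
  ‖LinearMap.toContinuousLinearMap (Matrix.toEuclideanLin A)‖

/-- The smallest eigenvalue of a square real matrix. -/
def lambdaMin {n : Type*} [Fintype n] (A : Matrix n n ℝ) : ℝ :=
  sInf {c : ℝ | ∃ v : n → ℝ, v ≠ 0 ∧ A.mulVec v = c • v}

/-- `invSqrt A` is `A^{-1/2}` for positive (semi)definite `A` (junk value `0` otherwise). -/
def invSqrt {n : Type*} [Fintype n] [DecidableEq n] (A : Matrix n n ℝ) : Matrix n n ℝ :=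
  haveI := Classical.dec A.PosSemidef
  if h : A.PosSemidef then (h.1.eigenvectorUnitary.1 * diagonal (Real.sqrt ∘ h.1.eigenvalues) *
    (star h.1.eigenvectorUnitary : Matrix n n ℝ))⁻¹ else 0

namespace CorD7aux

lemma dot_self_nonneg {n : Type*} [Fintype n] (v : n → ℝ) : 0 ≤ v ⬝ᵥ v :=
  Finset.sum_nonneg fun i _ => mul_self_nonneg _

lemma dot_self_pos {n : Type*} [Fintype n] {v : n → ℝ} (hv : v ≠ 0) : 0 < v ⬝ᵥ v :=
  lt_of_le_of_ne (dot_self_nonneg v) fun h => hv (dotProduct_self_eq_zero.mp h.symm)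

lemma abs_dot_mulVec_le {m n : Type*} [Fintype m] [Fintype n] [DecidableEq n]
    (A : Matrix m n ℝ) (u : m → ℝ) (w : n → ℝ) :
    |u ⬝ᵥ A.mulVec w| ≤ opNorm A * Real.sqrt (u ⬝ᵥ u) * Real.sqrt (w ⬝ᵥ w) := by
  set u' : EuclideanSpace ℝ m := (WithLp.equiv 2 (m → ℝ)).symm u with hu'
  set w' : EuclideanSpace ℝ n := (WithLp.equiv 2 (n → ℝ)).symm w with hw'
  set L := LinearMap.toContinuousLinearMap (Matrix.toEuclideanLin A) with hL
  have h1 : u ⬝ᵥ A.mulVec w = inner ℝ u' (L w') := by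
    simp only [hL, hu', hw', LinearMap.coe_toContinuousLinearMap',
      Matrix.toEuclideanLin_apply, PiLp.inner_apply, RCLike.inner_apply, starRingEnd_apply,
      star_trivial]
    rw [dotProduct]
    exact Finset.sum_congr rfl fun i _ => mul_comm _ _
  have hnu : Real.sqrt (u ⬝ᵥ u) = ‖u'‖ := by
    have : u ⬝ᵥ u = ‖u'‖ ^ 2 := by
      rw [← real_inner_self_eq_norm_sq]
      simp only [hu', PiLp.inner_apply, RCLike.inner_apply, starRingEnd_apply, star_trivial]
      rfl
    rw [this, Real.sqrt_sq (norm_nonneg _)]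
  have hnw : Real.sqrt (w ⬝ᵥ w) = ‖w'‖ := by
    have : w ⬝ᵥ w = ‖w'‖ ^ 2 := by
      rw [← real_inner_self_eq_norm_sq]
      simp only [hw', PiLp.inner_apply, RCLike.inner_apply, starRingEnd_apply, star_trivial]
      rfl
    rw [this, Real.sqrt_sq (norm_nonneg _)]
  rw [h1, hnu, hnw]
  calc |inner ℝ u' (L w')| ≤ ‖u'‖ * ‖L w'‖ := abs_real_inner_le_norm _ _
    _ ≤ ‖u'‖ * (‖L‖ * ‖w'‖) := by
        exact mul_le_mul_of_nonneg_left (L.le_opNorm w') (norm_nonneg _)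
    _ = opNorm A * ‖u'‖ * ‖w'‖ := by rw [opNorm, ← hL]; ring

lemma eig_bddBelow {n : Type*} [Fintype n] [DecidableEq n] (A : Matrix n n ℝ) :
    BddBelow {c : ℝ | ∃ v : n → ℝ, v ≠ 0 ∧ A.mulVec v = c • v} := by
  refine ⟨-(opNorm A), ?_⟩
  rintro c ⟨v, hv, hav⟩
  have hs : 0 < v ⬝ᵥ v := dot_self_pos hv
  have h1 : v ⬝ᵥ A.mulVec v = c * (v ⬝ᵥ v) := by
    rw [hav, dotProduct_smul]; rfl
  have h2 := abs_dot_mulVec_le A v v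
  have h3 : Real.sqrt (v ⬝ᵥ v) * Real.sqrt (v ⬝ᵥ v) = v ⬝ᵥ v :=
    Real.mul_self_sqrt hs.le
  rw [h1, mul_assoc, h3] at h2
  have h4 := neg_abs_le (c * (v ⬝ᵥ v))
  nlinarith [h2, h4, hs]

lemma eigen_mem {n : Type*} [Fintype n] [DecidableEq n] {A : Matrix n n ℝ}
    (hA : A.IsHermitian) (i : n) :
    hA.eigenvalues i ∈ {c : ℝ | ∃ v : n → ℝ, v ≠ 0 ∧ A.mulVec v = c • v} := by
  refine ⟨⇑(hA.eigenvectorBasis i), ?_, hA.mulVec_eigenvectorBasis i⟩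
  intro h
  exact hA.eigenvectorBasis.orthonormal.ne_zero i (by ext j; exact congrFun h j)

lemma quad_lower {n : Type*} [Fintype n] [DecidableEq n] {A : Matrix n n ℝ}
    (hA : A.IsHermitian) {a : ℝ} (ha : a ≤ lambdaMin A) (x : n → ℝ) :
    a * (x ⬝ᵥ x) ≤ x ⬝ᵥ A.mulVec x := by
  have hA' : (A - a • 1).IsHermitian := by
    refine hA.sub ?_
    rw [Matrix.smul_one_eq_diagonal]
    exact Matrix.isHermitian_diagonal _
  have key : ∀ i, 0 ≤ hA'.eigenvalues i := by
    intro i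
    obtain ⟨v, hv, hmv⟩ := eigen_mem hA' i
    rw [Matrix.sub_mulVec, Matrix.smul_mulVec, Matrix.one_mulVec, sub_eq_iff_eq_add] at hmv
    have hmem : hA'.eigenvalues i + a ∈ {c : ℝ | ∃ v : n → ℝ, v ≠ 0 ∧ A.mulVec v = c • v} := by
      refine ⟨v, hv, ?_⟩
      rw [hmv, ← add_smul]
    have hle : lambdaMin A ≤ hA'.eigenvalues i + a := csInf_le (eig_bddBelow A) hmem
    linarith
  have hps : (A - a • 1).PosSemidef := hA'.posSemidef_iff_eigenvalues_nonneg.mpr key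
  have h0 := hps.dotProduct_mulVec_nonneg x
  rw [star_trivial, Matrix.sub_mulVec, Matrix.smul_mulVec, Matrix.one_mulVec,
    dotProduct_sub, dotProduct_smul] at h0
  simp only [smul_eq_mul] at h0
  linarith

lemma dot_symm_mulVec {n : Type*} [Fintype n] {S : Matrix n n ℝ} (hS : Sᵀ = S)
    (x w : n → ℝ) : x ⬝ᵥ (S *ᵥ w) = (S *ᵥ x) ⬝ᵥ w := by
  conv_lhs => rw [Matrix.dotProduct_mulVec, ← hS, Matrix.vecMul_transpose]

lemma sqrt_aux {n : Type*} [Fintype n] [DecidableEq n] {A : Matrix n n ℝ} (hA : A.PosSemidef) :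
    (hA.1.eigenvectorUnitary.1 * diagonal (Real.sqrt ∘ hA.1.eigenvalues) *
      (star hA.1.eigenvectorUnitary : Matrix n n ℝ))ᵀ =
      hA.1.eigenvectorUnitary.1 * diagonal (Real.sqrt ∘ hA.1.eigenvalues) *
      (star hA.1.eigenvectorUnitary : Matrix n n ℝ) ∧
    (hA.1.eigenvectorUnitary.1 * diagonal (Real.sqrt ∘ hA.1.eigenvalues) *
      (star hA.1.eigenvectorUnitary : Matrix n n ℝ)) *
    (hA.1.eigenvectorUnitary.1 * diagonal (Real.sqrt ∘ hA.1.eigenvalues) *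
      (star hA.1.eigenvectorUnitary : Matrix n n ℝ)) = A := by
  have hU : (star hA.1.eigenvectorUnitary : Matrix n n ℝ) * hA.1.eigenvectorUnitary.1 = 1 :=
    Unitary.coe_star_mul_self _
  constructor
  · rw [Matrix.star_eq_conjTranspose,
      Matrix.conjTranspose_eq_transpose_of_trivial]
    simp only [Matrix.transpose_mul, Matrix.transpose_transpose, Matrix.diagonal_transpose,
      Matrix.mul_assoc]
  · have hD : diagonal (Real.sqrt ∘ hA.1.eigenvalues) * diagonal (Real.sqrt ∘ hA.1.eigenvalues)
        = diagonal (RCLike.ofReal ∘ hA.1.eigenvalues) := by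
      rw [Matrix.diagonal_mul_diagonal]
      congr 1
      funext i
      simp only [Function.comp_apply, RCLike.ofReal_real_eq_id, id]
      exact Real.mul_self_sqrt (hA.eigenvalues_nonneg i)
    conv_rhs => rw [hA.1.spectral_theorem, Unitary.conjStarAlgAut_apply]
    calc _ = hA.1.eigenvectorUnitary.1 * diagonal (Real.sqrt ∘ hA.1.eigenvalues) *
          ((star hA.1.eigenvectorUnitary : Matrix n n ℝ) * hA.1.eigenvectorUnitary.1) *
          diagonal (Real.sqrt ∘ hA.1.eigenvalues) *
          (star hA.1.eigenvectorUnitary : Matrix n n ℝ) := by simp only [Matrix.mul_assoc]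
      _ = _ := by rw [hU, Matrix.mul_one, Matrix.mul_assoc _ (diagonal _) (diagonal _), hD]

end CorD7aux

open CorD7aux in
/-- **Minimum eigenvalue of the per-arm design matrix (Corollary D.7).**
If `λ_min(V) ≥ ρτ/2`, `λ_min(W) ≥ ρτ/2` and `‖V^{-1/2} B W^{-1/2}‖ ≤ 1/2`, then the block
matrix `M = [[V,B],[Bᵀ,W]]` satisfies `λ_min(M) ≥ ρτ/4`. -/
theorem min_eigenvalue_per_arm_design_matrix
    {d₁ d₂ : ℕ} (ρ τ : ℝ) (hρ : 0 < ρ) (hτ : 0 < τ)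
    (V : Matrix (Fin d₁) (Fin d₁) ℝ) (W : Matrix (Fin d₂) (Fin d₂) ℝ)
    (B : Matrix (Fin d₁) (Fin d₂) ℝ)
    (hV : V.PosDef) (hW : W.PosDef)
    (hVmin : ρ * τ / 2 ≤ lambdaMin V) (hWmin : ρ * τ / 2 ≤ lambdaMin W)
    (hZ : opNorm (invSqrt V * B * invSqrt W) ≤ 1 / 2) :
    ρ * τ / 4 ≤ lambdaMin (Matrix.fromBlocks V B Bᵀ W) := by
  -- degenerate case: both dimensions zero
  by_cases hd : d₁ = 0 ∧ d₂ = 0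
  · exfalso
    obtain ⟨h1, _⟩ := hd
    subst h1
    have hempty : {c : ℝ | ∃ v : Fin 0 → ℝ, v ≠ 0 ∧ V.mulVec v = c • v} = ∅ := by
      ext c; simp only [Set.mem_setOf_eq, Set.mem_empty_iff_false, iff_false]
      rintro ⟨v, hv, -⟩
      exact hv (Subsingleton.elim v 0)
    have : lambdaMin V = 0 := by rw [lambdaMin, hempty, Real.sInf_empty]
    rw [this] at hVmin
    nlinarith
  haveI : Nonempty (Fin d₁ ⊕ Fin d₂) := by
    rcases Nat.eq_zero_or_pos d₁ with h1 | h1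
    · rcases Nat.eq_zero_or_pos d₂ with h2 | h2
      · exact absurd ⟨h1, h2⟩ hd
      · exact ⟨Sum.inr ⟨0, h2⟩⟩
    · exact ⟨Sum.inl ⟨0, h1⟩⟩
  have hVh : Vᵀ = V := (Matrix.conjTranspose_eq_transpose_of_trivial V) ▸ hV.1
  have hWh : Wᵀ = W := (Matrix.conjTranspose_eq_transpose_of_trivial W) ▸ hW.1
  set M := Matrix.fromBlocks V B Bᵀ W with hM
  have hMh : M.IsHermitian := by
    rw [Matrix.IsHermitian, Matrix.conjTranspose_eq_transpose_of_trivial, hM,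
      Matrix.fromBlocks_transpose, hVh, hWh, Matrix.transpose_transpose]
  -- square roots
  set S := hV.posSemidef.1.eigenvectorUnitary.1 * diagonal (Real.sqrt ∘ hV.posSemidef.1.eigenvalues) *
    (star hV.posSemidef.1.eigenvectorUnitary : Matrix (Fin d₁) (Fin d₁) ℝ) with hS
  set T := hW.posSemidef.1.eigenvectorUnitary.1 * diagonal (Real.sqrt ∘ hW.posSemidef.1.eigenvalues) *
    (star hW.posSemidef.1.eigenvectorUnitary : Matrix (Fin d₂) (Fin d₂) ℝ) with hT
  have hSt : Sᵀ = S := (sqrt_aux hV.posSemidef).1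
  have hTt : Tᵀ = T := (sqrt_aux hW.posSemidef).1
  have hSS : S * S = V := (sqrt_aux hV.posSemidef).2
  have hTT : T * T = W := (sqrt_aux hW.posSemidef).2
  have hSdet : IsUnit S.det := by
    have : S.det * S.det = V.det := by rw [← Matrix.det_mul, hSS]
    have hVdet : V.det ≠ 0 := hV.det_pos.ne'
    refine isUnit_iff_ne_zero.mpr fun h => hVdet ?_
    rw [← this, h, mul_zero]
  have hTdet : IsUnit T.det := by
    have : T.det * T.det = W.det := by rw [← Matrix.det_mul, hTT]
    have hWdet : W.det ≠ 0 := hW.det_pos.ne'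
    refine isUnit_iff_ne_zero.mpr fun h => hWdet ?_
    rw [← this, h, mul_zero]
  have hiV : invSqrt V = S⁻¹ := by rw [invSqrt, dif_pos hV.posSemidef]
  have hiW : invSqrt W = T⁻¹ := by rw [invSqrt, dif_pos hW.posSemidef]
  set Z := invSqrt V * B * invSqrt W with hZdef
  have hB : S * Z * T = B := by
    rw [hZdef, hiV, hiW]
    calc S * (S⁻¹ * B * T⁻¹) * T = (S * S⁻¹) * B * (T⁻¹ * T) := by
          simp only [Matrix.mul_assoc]
      _ = B := by rw [Matrix.mul_nonsing_inv S hSdet, Matrix.nonsing_inv_mul T hTdet,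
          Matrix.one_mul, Matrix.mul_one]
  -- the quadratic form bound
  have hquad : ∀ v : (Fin d₁ ⊕ Fin d₂) → ℝ,
      ρ * τ / 4 * (v ⬝ᵥ v) ≤ v ⬝ᵥ M.mulVec v := by
    intro v
    set x := v ∘ Sum.inl with hx
    set y := v ∘ Sum.inr with hy
    have hv' : v = Sum.elim x y := (Sum.elim_comp_inl_inr v).symm
    rw [hv', hM]
    simp only [Matrix.fromBlocks_mulVec, Sum.elim_comp_inl, Sum.elim_comp_inr,
      sumElim_dotProduct_sumElim, dotProduct_add]
    have hyx : y ⬝ᵥ Bᵀ *ᵥ x = x ⬝ᵥ B *ᵥ y := by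
      rw [Matrix.dotProduct_mulVec, Matrix.vecMul_transpose, dotProduct_comm]
    rw [hyx]
    set u := S *ᵥ x with hu
    set w := T *ᵥ y with hw
    have hux : u ⬝ᵥ u = x ⬝ᵥ V *ᵥ x := by
      rw [hu, ← dot_symm_mulVec hSt, Matrix.mulVec_mulVec, hSS]
    have hwy : w ⬝ᵥ w = y ⬝ᵥ W *ᵥ y := by
      rw [hw, ← dot_symm_mulVec hTt, Matrix.mulVec_mulVec, hTT]
    have hxBy : x ⬝ᵥ B *ᵥ y = u ⬝ᵥ Z *ᵥ w := by
      rw [← hB, ← Matrix.mulVec_mulVec, ← hw, ← Matrix.mulVec_mulVec,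
        dot_symm_mulVec hSt, ← hu]
    have hD := abs_dot_mulVec_le Z u w
    set a := Real.sqrt (u ⬝ᵥ u) with ha
    set b := Real.sqrt (w ⬝ᵥ w) with hb
    have ha0 : 0 ≤ a := Real.sqrt_nonneg _
    have hb0 : 0 ≤ b := Real.sqrt_nonneg _
    have haa : a * a = u ⬝ᵥ u := Real.mul_self_sqrt (dot_self_nonneg u)
    have hbb : b * b = w ⬝ᵥ w := Real.mul_self_sqrt (dot_self_nonneg w)
    have hP : ρ * τ / 2 * (x ⬝ᵥ x) ≤ x ⬝ᵥ V *ᵥ x := quad_lower hV.1 hVmin x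
    have hQ : ρ * τ / 2 * (y ⬝ᵥ y) ≤ y ⬝ᵥ W *ᵥ y := quad_lower hW.1 hWmin y
    have hZ0 : 0 ≤ opNorm Z := norm_nonneg _
    have hDabs : |u ⬝ᵥ Z *ᵥ w| ≤ 1 / 2 * (a * b) := by
      calc |u ⬝ᵥ Z *ᵥ w| ≤ opNorm Z * a * b := hD
        _ ≤ 1 / 2 * (a * b) := by nlinarith [mul_nonneg ha0 hb0]
    have hDlow : -(1 / 2 * (a * b)) ≤ u ⬝ᵥ Z *ᵥ w := neg_le_of_abs_le hDabs
    have hxx : 0 ≤ x ⬝ᵥ x := dot_self_nonneg x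
    have hyy : 0 ≤ y ⬝ᵥ y := dot_self_nonneg y
    rw [hxBy]
    nlinarith [sq_nonneg (a - b), hP, hQ, hDlow, haa, hbb, hux, hwy,
      mul_pos hρ hτ, hxx, hyy]
  -- conclude about the infimum
  rw [lambdaMin]
  refine le_csInf ⟨hMh.eigenvalues (Classical.arbitrary _),
    eigen_mem hMh (Classical.arbitrary _)⟩ ?_
  rintro c ⟨v, hv, hmv⟩
  have hs : 0 < v ⬝ᵥ v := dot_self_pos hv
  have h1 : v ⬝ᵥ M.mulVec v = c * (v ⬝ᵥ v) := by rw [hmv, dotProduct_smul]; rfl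
  have h2 := hquad v
  nlinarith [h1, h2, hs]
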